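/- For every real number x ≥ 0, the Mill's ratio of the standard Gaussian satisfies exp(x²/2)·∫ₓ^∞ exp(−t²/2) dt ≥ π/((π−1)·x + √(x² + 2π)) ≥ π/(π·x + √(2π)). -/

import Mathlib

open Real MeasureTheory Set Filter

noncomputable def mrS (x : ℝ) : ℝ := Real.sqrt (x^2 + 2*π)
noncomputable def mrD (x : ℝ) : ℝ := (π-1)*x + mrS x
noncomputable def mrG (x : ℝ) : ℝ := π / mrD x
noncomputable def mrG' (x : ℝ) : ℝ := -(π * ((π-1) + x / mrS x)) / (mrD x)^2
noncomputable def mrE (x : ℝ) : ℝ := x * mrG x - 1 - mrG' x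
noncomputable def mrP (x : ℝ) : ℝ :=
  (∫ t in Set.Ioi x, Real.exp (-t^2/2)) - mrG x * Real.exp (-x^2/2)
noncomputable def mrX : ℝ := Real.sqrt (2*π*(π-3)^2/(1-(π-3)^2))

lemma mr_integrable : Integrable (fun t : ℝ => Real.exp (-t^2/2)) := by
  have := integrable_exp_neg_mul_sq (b := 1/2) (by norm_num)
  convert this using 2 with t
  ring_nf

lemma mrS_pos (x : ℝ) : 0 < mrS x :=
  Real.sqrt_pos.2 (by positivity)

lemma mrS_sq (x : ℝ) : (mrS x)^2 = x^2 + 2*π :=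
  Real.sq_sqrt (by positivity)

lemma mrS_gt (x : ℝ) (hx : 0 ≤ x) : x < mrS x := by
  nlinarith [mrS_pos x, mrS_sq x, Real.pi_pos]

lemma mrD_pos (x : ℝ) (hx : 0 ≤ x) : 0 < mrD x := by
  have h1 : (1:ℝ) < π - 1 := by nlinarith [Real.pi_gt_three]
  unfold mrD
  nlinarith [mrS_pos x]

lemma mr_ident (y : ℝ) :
    (∫ t in Set.Ioi y, Real.exp (-t^2/2)) =
      (∫ t in Set.Ioi (0:ℝ), Real.exp (-t^2/2)) - ∫ t in (0:ℝ)..y, Real.exp (-t^2/2) := by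
  rcases le_or_gt 0 y with hy | hy
  · rw [intervalIntegral.integral_of_le hy, ← Ioc_union_Ioi_eq_Ioi hy,
      setIntegral_union (Ioc_disjoint_Ioi le_rfl) measurableSet_Ioi
        (mr_integrable.integrableOn) (mr_integrable.integrableOn)]
    ring
  · rw [intervalIntegral.integral_of_ge hy.le,
      ← Ioc_union_Ioi_eq_Ioi hy.le,
      setIntegral_union (Ioc_disjoint_Ioi le_rfl) measurableSet_Ioi
        (mr_integrable.integrableOn) (mr_integrable.integrableOn)]
    ring

lemma mr_hasDerivAt_S (x : ℝ) : HasDerivAt mrS (x / mrS x) x := by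
  have h1 : HasDerivAt (fun y : ℝ => y^2 + 2*π) (2*x) x := by
    simpa using (hasDerivAt_pow 2 x).add_const (2*π)
  have h2 := h1.sqrt (by positivity)
  have hs : Real.sqrt (x^2+2*π) = mrS x := rfl
  rw [show x / mrS x = 2*x / (2 * Real.sqrt (x^2+2*π)) by rw [hs]; ring]
  exact h2

lemma mr_hasDerivAt_D (x : ℝ) : HasDerivAt mrD ((π-1) + x / mrS x) x := by
  have := ((hasDerivAt_id x).const_mul (π-1)).add (mr_hasDerivAt_S x)
  exact this.congr_deriv (by simp)

lemma mr_hasDerivAt_G (x : ℝ) (hx : 0 ≤ x) : HasDerivAt mrG (mrG' x) x := by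
  have h := (hasDerivAt_const x π).div (mr_hasDerivAt_D x) (mrD_pos x hx).ne'
  refine h.congr_deriv ?_
  unfold mrG'
  field_simp
  ring

lemma mrE_key (x : ℝ) (hx : 0 ≤ x) :
    mrE x * ((mrD x)^2 * (mrS x * (mrS x + x))) = π * (mrS x - x) * ((π-3) * mrS x - x) := by
  have hs := mrS_sq x
  have hs0 := (mrS_pos x).ne'
  have hD0 := (mrD_pos x hx).ne'
  have hD0' : (π-1)*x + mrS x ≠ 0 := by unfold mrD at hD0; exact hD0
  have key' : mrE x * (((π-1)*x + mrS x)^2 * mrS x)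
      = π*x*((π-1)*x + mrS x)*mrS x - ((π-1)*x + mrS x)^2*mrS x + π*((π-1)*mrS x + x) := by
    unfold mrE mrG mrG'
    rw [show (π-1)*x + mrS x = mrD x from rfl]
    field_simp
    unfold mrD
    ring
  unfold mrD
  linear_combination (mrS x + x) * key' + (-(mrS x)^2 + x*mrS x - π*x*mrS x) * hs

lemma mrE_nonneg (x : ℝ) (hx : 0 ≤ x) (hc : x ≤ (π-3) * mrS x) : 0 ≤ mrE x := by
  have key := mrE_key x hx
  have h1 : 0 < (mrD x)^2 * (mrS x * (mrS x + x)) := by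
    have := mrS_pos x; have := mrD_pos x hx; positivity
  have h2 : 0 ≤ π * (mrS x - x) * ((π-3) * mrS x - x) := by
    have h3 := mrS_gt x hx
    exact mul_nonneg (mul_nonneg Real.pi_pos.le (by linarith)) (by linarith)
  nlinarith

lemma mrE_nonpos (x : ℝ) (hx : 0 ≤ x) (hc : (π-3) * mrS x ≤ x) : mrE x ≤ 0 := by
  have key := mrE_key x hx
  have h1 : 0 < (mrD x)^2 * (mrS x * (mrS x + x)) := by
    have := mrS_pos x; have := mrD_pos x hx; positivity
  have h2 : π * (mrS x - x) * ((π-3) * mrS x - x) ≤ 0 := by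
    have h3 := mrS_gt x hx
    exact mul_nonpos_of_nonneg_of_nonpos (mul_nonneg Real.pi_pos.le (by linarith)) (by linarith)
  nlinarith

lemma mr_c_lt_one : (π-3)^2 < 1 := by
  have h1 := Real.pi_gt_three
  have h2 := Real.pi_lt_d2
  nlinarith

lemma mrX_sq : mrX^2 = 2*π*(π-3)^2/(1-(π-3)^2) := by
  have h := mr_c_lt_one
  have h1 := Real.pi_gt_three
  apply Real.sq_sqrt
  have : 0 < 1-(π-3)^2 := by linarith
  positivity

lemma mrX_pos : 0 < mrX := by
  apply Real.sqrt_pos.2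
  have h := mr_c_lt_one
  have h1 := Real.pi_gt_three
  have : 0 < 1-(π-3)^2 := by linarith
  have h3 : 0 < (π-3)^2 := by nlinarith
  positivity

lemma mr_cond_of_le (x : ℝ) (hx : 0 ≤ x) (h : x ≤ mrX) : x ≤ (π-3) * mrS x := by
  have h1 := mr_c_lt_one
  have h2 := Real.pi_gt_three
  have hd : 0 < 1-(π-3)^2 := by linarith
  have hx2 : x^2 * (1-(π-3)^2) ≤ 2*π*(π-3)^2 := by
    have : x^2 ≤ mrX^2 := by nlinarith [mrX_pos]
    rw [mrX_sq] at this
    calc x^2 * (1-(π-3)^2) ≤ (2*π*(π-3)^2/(1-(π-3)^2)) * (1-(π-3)^2) :=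
          mul_le_mul_of_nonneg_right this hd.le
      _ = 2*π*(π-3)^2 := by field_simp
  have hsq : x^2 ≤ ((π-3) * mrS x)^2 := by
    rw [mul_pow, mrS_sq]; nlinarith
  have h3 : 0 ≤ (π-3) * mrS x := mul_nonneg (by linarith) (mrS_pos x).le
  nlinarith [hsq, h3, mrS_pos x]

lemma mr_cond_of_ge (x : ℝ) (h : mrX ≤ x) : (π-3) * mrS x ≤ x := by
  have h1 := mr_c_lt_one
  have h2 := Real.pi_gt_three
  have hd : 0 < 1-(π-3)^2 := by linarith
  have hx : 0 ≤ x := mrX_pos.le.trans h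
  have hx2 : 2*π*(π-3)^2 ≤ x^2 * (1-(π-3)^2) := by
    have : mrX^2 ≤ x^2 := by nlinarith [mrX_pos]
    rw [mrX_sq] at this
    calc 2*π*(π-3)^2 = (2*π*(π-3)^2/(1-(π-3)^2)) * (1-(π-3)^2) := by field_simp
      _ ≤ x^2 * (1-(π-3)^2) := mul_le_mul_of_nonneg_right this hd.le
  have hsq : ((π-3) * mrS x)^2 ≤ x^2 := by
    rw [mul_pow, mrS_sq]; nlinarith
  have h3 : 0 ≤ (π-3) * mrS x := mul_nonneg (by linarith) (mrS_pos x).le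
  nlinarith [hsq, h3, mrS_pos x]

lemma mr_cont : Continuous (fun t : ℝ => Real.exp (-t^2/2)) := by
  fun_prop

lemma mr_hasDerivAt_I (x : ℝ) :
    HasDerivAt (fun y => ∫ t in Set.Ioi y, Real.exp (-t^2/2)) (-Real.exp (-x^2/2)) x := by
  have hF : HasDerivAt (fun y => ∫ t in (0:ℝ)..y, Real.exp (-t^2/2)) (Real.exp (-x^2/2)) x :=
    intervalIntegral.integral_hasDerivAt_right (mr_integrable.intervalIntegrable)
      (mr_cont.stronglyMeasurableAtFilter _ _) mr_cont.continuousAt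
  have h2 := (hasDerivAt_const x (∫ t in Set.Ioi (0:ℝ), Real.exp (-t^2/2))).sub hF
  simp only [zero_sub] at h2
  have heq : (fun y => ∫ t in Set.Ioi y, Real.exp (-t^2/2))
      = fun y => (∫ t in Set.Ioi (0:ℝ), Real.exp (-t^2/2)) - ∫ t in (0:ℝ)..y, Real.exp (-t^2/2) :=
    funext mr_ident
  rw [heq]
  exact h2

lemma mr_hasDerivAt_exp (x : ℝ) :
    HasDerivAt (fun y : ℝ => Real.exp (-y^2/2)) (-x * Real.exp (-x^2/2)) x := by
  have h1 : HasDerivAt (fun y : ℝ => -y^2/2) (-x) x := by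
    have := ((hasDerivAt_pow 2 x).neg).div_const 2
    simpa using this.congr_deriv (by ring)
  simpa [mul_comm] using h1.exp

lemma mr_hasDerivAt_P (x : ℝ) (hx : 0 ≤ x) :
    HasDerivAt mrP (Real.exp (-x^2/2) * mrE x) x := by
  have h := (mr_hasDerivAt_I x).sub ((mr_hasDerivAt_G x hx).mul (mr_hasDerivAt_exp x))
  have heq : Real.exp (-x^2/2) * mrE x
      = -Real.exp (-x^2/2) - (mrG' x * Real.exp (-x^2/2) + mrG x * (-x * Real.exp (-x^2/2))) := by
    unfold mrE; ring
  rw [heq]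
  exact h

lemma mr_tendsto_exp : Tendsto (fun y : ℝ => Real.exp (-y^2/2)) atTop (nhds 0) := by
  apply Real.tendsto_exp_atBot.comp
  have h1 : Tendsto (fun y : ℝ => y^2/2) atTop atTop :=
    (tendsto_pow_atTop (by norm_num)).atTop_div_const (by norm_num)
  have h2 := tendsto_neg_atTop_atBot.comp h1
  have heq : (fun y : ℝ => -y^2/2) = fun y : ℝ => -(y^2/2) := by funext y; ring
  rw [heq]
  exact h2

lemma mrG_le (y : ℝ) (hy : 0 ≤ y) : mrG y ≤ π / Real.sqrt (2*π) := by
  unfold mrG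
  apply div_le_div_of_nonneg_left Real.pi_pos.le (Real.sqrt_pos.2 (by positivity))
  have h1 : Real.sqrt (2*π) ≤ Real.sqrt (y^2 + 2*π) := Real.sqrt_le_sqrt (by nlinarith)
  have h2 : (1:ℝ) < π - 1 := by nlinarith [Real.pi_gt_three]
  unfold mrD mrS
  nlinarith

lemma mrG_nonneg (y : ℝ) (hy : 0 ≤ y) : 0 ≤ mrG y :=
  le_of_lt (div_pos Real.pi_pos (mrD_pos y hy))

lemma mr_tendsto_Gexp : Tendsto (fun y => mrG y * Real.exp (-y^2/2)) atTop (nhds 0) := by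
  apply squeeze_zero' (g := fun y => π / Real.sqrt (2*π) * Real.exp (-y^2/2))
  · exact Filter.eventually_atTop.2 ⟨0, fun y hy =>
      mul_nonneg (mrG_nonneg y hy) (Real.exp_pos _).le⟩
  · exact Filter.eventually_atTop.2 ⟨0, fun y hy =>
      mul_le_mul_of_nonneg_right (mrG_le y hy) (Real.exp_pos _).le⟩
  · simpa using mr_tendsto_exp.const_mul (π / Real.sqrt (2*π))

lemma mr_tendsto_P : Tendsto mrP atTop (nhds 0) := by
  have h1 : Tendsto (fun y => ∫ t in Set.Ioi y, Real.exp (-t^2/2)) atTop (nhds 0) := by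
    have h2 := MeasureTheory.intervalIntegral_tendsto_integral_Ioi 0
      (mr_integrable.integrableOn) tendsto_id
    have h3 := (tendsto_const_nhds
      (x := ∫ t in Set.Ioi (0:ℝ), Real.exp (-t^2/2)) (f := atTop)).sub h2
    rw [sub_self] at h3
    have heq : (fun y => ∫ t in Set.Ioi y, Real.exp (-t^2/2))
        = fun y => (∫ t in Set.Ioi (0:ℝ), Real.exp (-t^2/2)) - ∫ t in (0:ℝ)..y, Real.exp (-t^2/2) :=
      funext mr_ident
    rw [heq]
    exact h3
  have h4 := h1.sub mr_tendsto_Gexp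
  rw [sub_self] at h4
  exact h4

lemma mrP_zero : mrP 0 = 0 := by
  have h1 : (∫ t in Set.Ioi (0:ℝ), Real.exp (-t^2/2)) = Real.sqrt (2*π) / 2 := by
    have h := integral_gaussian_Ioi (1/2)
    have heq : (∫ t in Set.Ioi (0:ℝ), Real.exp (-t^2/2))
        = ∫ t in Set.Ioi (0:ℝ), Real.exp (-(1/2) * t^2) := by
      congr 1 with t
      ring_nf
    rw [heq, h]
    rw [show π / (1/2 : ℝ) = 2*π by ring]
  have hs0 : Real.sqrt (2*π) ≠ 0 := by positivity
  have hs2 : (Real.sqrt (2*π))^2 = 2*π := Real.sq_sqrt (by positivity)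
  unfold mrP mrG mrD mrS
  rw [h1]
  norm_num
  have hs2' : (Real.sqrt 2 * Real.sqrt π)^2 = 2*π := by
    rw [mul_pow, Real.sq_sqrt (by norm_num : (0:ℝ) ≤ 2), Real.sq_sqrt Real.pi_pos.le]
  have hne : Real.sqrt 2 * Real.sqrt π ≠ 0 := by positivity
  field_simp
  nlinarith [hs2']

lemma mrP_nonneg (x : ℝ) (hx : 0 ≤ x) : 0 ≤ mrP x := by
  rcases le_total x mrX with h | h
  · have mono : MonotoneOn mrP (Icc 0 mrX) := by
      apply monotoneOn_of_deriv_nonneg (convex_Icc 0 mrX)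
      · intro y hy
        exact (mr_hasDerivAt_P y hy.1).continuousAt.continuousWithinAt
      · intro y hy
        rw [interior_Icc] at hy
        exact (mr_hasDerivAt_P y hy.1.le).differentiableAt.differentiableWithinAt
      · intro y hy
        rw [interior_Icc] at hy
        rw [(mr_hasDerivAt_P y hy.1.le).deriv]
        exact mul_nonneg (Real.exp_pos _).le
          (mrE_nonneg y hy.1.le (mr_cond_of_le y hy.1.le hy.2.le))
    have h2 := mono ⟨le_rfl, mrX_pos.le⟩ ⟨hx, h⟩ hx
    rwa [mrP_zero] at h2
  · have anti : AntitoneOn mrP (Ici mrX) := by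
      apply antitoneOn_of_deriv_nonpos (convex_Ici mrX)
      · intro y hy
        exact (mr_hasDerivAt_P y (mrX_pos.le.trans hy)).continuousAt.continuousWithinAt
      · intro y hy
        rw [interior_Ici] at hy
        exact (mr_hasDerivAt_P y (mrX_pos.le.trans hy.le)).differentiableAt.differentiableWithinAt
      · intro y hy
        rw [interior_Ici] at hy
        rw [(mr_hasDerivAt_P y (mrX_pos.le.trans hy.le)).deriv]
        exact mul_nonpos_of_nonneg_of_nonpos (Real.exp_pos _).le
          (mrE_nonpos y (mrX_pos.le.trans hy.le) (mr_cond_of_ge y hy.le))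
    apply le_of_tendsto mr_tendsto_P
    exact Filter.eventually_atTop.2 ⟨x, fun y hy => anti h (h.trans hy) hy⟩

/-- Mill's ratio lower bound for the standard Gaussian (Boyd's bound and its
simplification): for `x ≥ 0`,
`exp(x²/2) ∫ₓ^∞ exp(−t²/2) dt ≥ π/((π−1)x + √(x²+2π)) ≥ π/(πx + √(2π))`. -/
theorem mills_ratio_lower_bound (x : ℝ) (hx : 0 ≤ x) :
    Real.exp (x ^ 2 / 2) * (∫ t in Set.Ioi x, Real.exp (-t ^ 2 / 2)) ≥
      π / ((π - 1) * x + Real.sqrt (x ^ 2 + 2 * π)) ∧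
    π / ((π - 1) * x + Real.sqrt (x ^ 2 + 2 * π)) ≥
      π / (π * x + Real.sqrt (2 * π)) := by
  constructor
  · have hP := mrP_nonneg x hx
    have hI : mrG x * Real.exp (-x^2/2) ≤ ∫ t in Set.Ioi x, Real.exp (-t^2/2) := by
      unfold mrP at hP; linarith
    have hpos := Real.exp_pos (x^2/2)
    rw [ge_iff_le]
    have hGdef : π / ((π - 1) * x + Real.sqrt (x ^ 2 + 2 * π)) = mrG x := rfl
    have key : mrG x = Real.exp (x^2/2) * (mrG x * Real.exp (-x^2/2)) := by
      rw [← mul_assoc, mul_comm (Real.exp (x^2/2)), mul_assoc, ← Real.exp_add,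
        show x^2/2 + -x^2/2 = 0 by ring, Real.exp_zero, mul_one]
    rw [hGdef, key]
    exact mul_le_mul_of_nonneg_left hI hpos.le
  · rw [ge_iff_le]
    have hs2 : (Real.sqrt (2*π))^2 = 2*π := Real.sq_sqrt (by positivity)
    have h1 : Real.sqrt (x^2+2*π) ≤ x + Real.sqrt (2*π) := by
      rw [show x + Real.sqrt (2*π) = Real.sqrt ((x+Real.sqrt (2*π))^2) from
        (Real.sqrt_sq (by positivity)).symm]
      apply Real.sqrt_le_sqrt
      nlinarith [Real.sqrt_nonneg (2*π)]
    have hle : (π-1)*x + Real.sqrt (x^2+2*π) ≤ π*x + Real.sqrt (2*π) := by linarith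
    exact div_le_div_of_nonneg_left Real.pi_pos.le (mrD_pos x hx) hle
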